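/- Let n ≥ 2, let t be an integer with 2 ≤ t ≤ n, let p ∈ (0,1), and let k be an integer with 1 ≤ k ≤ n. Then the supremum of P_θ(∑_{i=1}^n c_i ≥ k) over all t-wise independent distributions θ with identical marginal probability p equals the supremum of ∑_{ℓ=k}^n v_ℓ over all vectors (v_0, v_1, …, v_n) of nonnegative reals satisfying ∑_{ℓ=m}^n C(ℓ,m)·v_ℓ = C(n,m)·p^m for every integer m with 0 ≤ m ≤ t, where C(a,b) denotes the binomial coefficient. -/

import Mathlib

open Finset

noncomputable section

/-- Probability that at least `k` of the `n` coordinates equal `1` under the pmf `θ` on `{0,1}^n`. -/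
def probGE (n : ℕ) (θ : (Fin n → Bool) → ℝ) (k : ℕ) : ℝ :=
  ∑ c ∈ Finset.univ.filter
      (fun c : Fin n → Bool => k ≤ (Finset.univ.filter (fun i => c i = true)).card), θ c

/-- Probability that all `n` coordinates equal `1` under the pmf `θ` on `{0,1}^n`. -/
def probAll (n : ℕ) (θ : (Fin n → Bool) → ℝ) : ℝ :=
  ∑ c ∈ Finset.univ.filter (fun c : Fin n → Bool => ∀ i, c i = true), θ c

/-- `θ` is a probability mass function on `{0,1}^n`. -/
def IsDist (n : ℕ) (θ : (Fin n → Bool) → ℝ) : Prop :=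
  (∀ c, 0 ≤ θ c) ∧ (∑ c, θ c = 1)

/-- Univariate marginal probability `P_θ(c_i = 1)`. -/
def Marg (n : ℕ) (θ : (Fin n → Bool) → ℝ) (i : Fin n) : ℝ :=
  ∑ c ∈ Finset.univ.filter (fun c : Fin n → Bool => c i = true), θ c

/-- Bivariate probability `P_θ(c_i = 1, c_j = 1)`. -/
def Biv (n : ℕ) (θ : (Fin n → Bool) → ℝ) (i j : Fin n) : ℝ :=
  ∑ c ∈ Finset.univ.filter (fun c : Fin n → Bool => c i = true ∧ c j = true), θ c

/-- `θ` is a pairwise independent distribution with marginal vector `p`. -/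
def PairwiseIndep (n : ℕ) (p : Fin n → ℝ) (θ : (Fin n → Bool) → ℝ) : Prop :=
  IsDist n θ ∧ (∀ i, Marg n θ i = p i) ∧
    (∀ i j : Fin n, i < j → Biv n θ i j = p i * p j)

/-- `θ` is a `t`-wise independent distribution on `{0,1}^n` with identical marginal
probability `p`. -/
def TWiseIndep (n t : ℕ) (p : ℝ) (θ : (Fin n → Bool) → ℝ) : Prop :=
  IsDist n θ ∧
    ∀ J : Finset (Fin n), J.Nonempty → J.card ≤ t →
      (∑ c ∈ Finset.univ.filter (fun c : Fin n → Bool => ∀ i ∈ J, c i = true), θ c) =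
        p ^ J.card

namespace Stmt14Aux

/-- The standard equivalence between `Fin n → Bool` and `Finset (Fin n)`. -/
def onesEquiv (n : ℕ) : (Fin n → Bool) ≃ Finset (Fin n) where
  toFun c := Finset.univ.filter (fun i => c i = true)
  invFun S := fun i => decide (i ∈ S)
  left_inv c := by
    funext i
    cases h : c i <;> simp [h]
  right_inv S := by
    ext i
    simp

variable {n : ℕ}

/-- The symmetrization (fiber sums over the number of ones). -/
def vOf (w : Finset (Fin n) → ℝ) (ℓ : ℕ) : ℝ :=
  ∑ S ∈ Finset.univ.filter (fun S : Finset (Fin n) => S.card = ℓ), w S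

lemma sum_toFinset (f : Finset (Fin n) → ℝ) :
    ∑ c : Fin n → Bool, f (Finset.univ.filter (fun i => c i = true))
      = ∑ S : Finset (Fin n), f S :=
  Fintype.sum_equiv (onesEquiv n) _ _ (fun _ => rfl)

lemma sumA (θ : (Fin n → Bool) → ℝ) (P : Finset (Fin n) → Prop) [DecidablePred P]
    (Q : (Fin n → Bool) → Prop) [DecidablePred Q]
    (h : ∀ c, Q c ↔ P (Finset.univ.filter fun i => c i = true)) :
    ∑ c ∈ Finset.univ.filter Q, θ c
      = ∑ S ∈ Finset.univ.filter P, θ ((onesEquiv n).symm S) := by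
  rw [Finset.sum_filter, Finset.sum_filter,
    ← sum_toFinset (fun S => if P S then θ ((onesEquiv n).symm S) else 0)]
  refine Finset.sum_congr rfl fun c _ => ?_
  have h2 : (onesEquiv n).symm (Finset.univ.filter fun i => c i = true) = c :=
    (onesEquiv n).symm_apply_apply c
  by_cases hc : Q c
  · rw [if_pos hc, if_pos ((h c).1 hc), h2]
  · rw [if_neg hc, if_neg (fun hp => hc ((h c).2 hp))]

lemma master (w : Finset (Fin n) → ℝ) (g : ℕ → ℝ) :
    ∑ S : Finset (Fin n), g S.card * w S
      = ∑ ℓ ∈ Finset.range (n + 1), g ℓ * vOf w ℓ := by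
  rw [← Finset.sum_fiberwise_of_maps_to (g := fun S : Finset (Fin n) => S.card)
      (t := Finset.range (n + 1))
      (fun S _ => Finset.mem_range.2 (Nat.lt_succ_of_le (by
        simpa using Finset.card_le_univ S)))]
  refine Finset.sum_congr rfl fun ℓ _ => ?_
  rw [vOf, Finset.mul_sum]
  exact Finset.sum_congr rfl fun S hS => by rw [(Finset.mem_filter.1 hS).2]

lemma filter_card_sum (w : Finset (Fin n) → ℝ) (P : ℕ → Prop) [DecidablePred P] :
    ∑ S ∈ Finset.univ.filter (fun S : Finset (Fin n) => P S.card), w S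
      = ∑ ℓ ∈ (Finset.range (n + 1)).filter P, vOf w ℓ := by
  rw [Finset.sum_filter, Finset.sum_filter]
  have := master w (fun ℓ => if P ℓ then (1 : ℝ) else 0)
  simp only [ite_mul, one_mul, zero_mul] at this
  exact this

lemma double_count (w : Finset (Fin n) → ℝ) (m : ℕ) :
    ∑ S : Finset (Fin n), (S.card.choose m : ℝ) * w S
      = ∑ J ∈ Finset.powersetCard m (Finset.univ : Finset (Fin n)),
          ∑ S ∈ Finset.univ.filter (fun S => J ⊆ S), w S := by
  simp_rw [Finset.sum_filter]
  rw [Finset.sum_comm]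
  refine Finset.sum_congr rfl fun S _ => ?_
  rw [← Finset.sum_filter]
  have hset : (Finset.powersetCard m (Finset.univ : Finset (Fin n))).filter (fun J => J ⊆ S)
      = S.powersetCard m := by
    ext J
    simp only [Finset.mem_filter, Finset.mem_powersetCard, Finset.subset_univ, true_and]
    tauto
  rw [hset, Finset.sum_const, Finset.card_powersetCard, nsmul_eq_mul]

lemma count_superset (J : Finset (Fin n)) (ℓ : ℕ) (hm : J.card ≤ ℓ) :
    ((Finset.univ : Finset (Finset (Fin n))).filter fun S => S.card = ℓ ∧ J ⊆ S).card
      = (n - J.card).choose (ℓ - J.card) := by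
  have key : ((Finset.univ : Finset (Finset (Fin n))).filter fun S => S.card = ℓ ∧ J ⊆ S).card
      = ((Finset.univ \ J).powersetCard (ℓ - J.card)).card := by
    apply Finset.card_bij (fun S _ => S \ J)
    · intro S hS
      obtain ⟨hc, hJ⟩ := (Finset.mem_filter.1 hS).2
      rw [Finset.mem_powersetCard]
      exact ⟨Finset.sdiff_subset_sdiff (Finset.subset_univ S) le_rfl,
        by rw [Finset.card_sdiff_of_subset hJ, hc]⟩
    · intro S hS S' hS' hEq
      obtain ⟨_, hJ⟩ := (Finset.mem_filter.1 hS).2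
      obtain ⟨_, hJ'⟩ := (Finset.mem_filter.1 hS').2
      rw [← Finset.union_sdiff_of_subset hJ, ← Finset.union_sdiff_of_subset hJ', hEq]
    · intro T hT
      rw [Finset.mem_powersetCard] at hT
      obtain ⟨hTsub, hTcard⟩ := hT
      have hdisj : Disjoint T J := by
        refine Finset.disjoint_left.2 fun a haT haJ => ?_
        have := hTsub haT
        simp [haJ] at this
      refine ⟨T ∪ J, ?_, ?_⟩
      · rw [Finset.mem_filter]
        refine ⟨Finset.mem_univ _, ?_, Finset.subset_union_right⟩
        rw [Finset.card_union_of_disjoint hdisj, hTcard, Nat.sub_add_cancel hm]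
      · rw [Finset.union_sdiff_right, Finset.sdiff_eq_self_of_disjoint hdisj]
  rw [key, Finset.card_powersetCard, Finset.card_sdiff_of_subset (Finset.subset_univ J),
    Finset.card_univ, Fintype.card_fin]

lemma count_superset_empty (J : Finset (Fin n)) (ℓ : ℕ) (hm : ℓ < J.card) :
    ((Finset.univ : Finset (Finset (Fin n))).filter fun S => S.card = ℓ ∧ J ⊆ S) = ∅ := by
  rw [Finset.filter_eq_empty_iff]
  rintro S _ ⟨hc, hJ⟩
  exact absurd (Finset.card_le_card hJ) (by omega)

lemma Icc_eq_filter_range (a : ℕ) :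
    Finset.Icc a n = (Finset.range (n + 1)).filter (fun ℓ => a ≤ ℓ) := by
  ext ℓ
  simp only [Finset.mem_Icc, Finset.mem_filter, Finset.mem_range]
  omega

end Stmt14Aux

open Stmt14Aux in
theorem stmt_14 (n t k : ℕ) (hn : 2 ≤ n) (ht2 : 2 ≤ t) (htn : t ≤ n)
    (hk1 : 1 ≤ k) (hkn : k ≤ n)
    (p : ℝ) (hp0 : 0 < p) (hp1 : p < 1) :
    sSup {x : ℝ | ∃ θ : (Fin n → Bool) → ℝ, TWiseIndep n t p θ ∧ probGE n θ k = x} =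
    sSup {x : ℝ | ∃ v : ℕ → ℝ, (∀ ℓ, 0 ≤ v ℓ) ∧
      (∀ m : ℕ, m ≤ t →
        (∑ ℓ ∈ Finset.Icc m n, (ℓ.choose m : ℝ) * v ℓ) = (n.choose m : ℝ) * p ^ m) ∧
      x = ∑ ℓ ∈ Finset.Icc k n, v ℓ} := by
  congr 1
  ext x
  simp only [Set.mem_setOf_eq]
  constructor
  · -- from a distribution to a vector
    rintro ⟨θ, ⟨⟨hθ0, hθ1⟩, hind⟩, rfl⟩
    set w : Finset (Fin n) → ℝ := fun S => θ ((onesEquiv n).symm S) with hw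
    refine ⟨vOf w, fun ℓ => Finset.sum_nonneg fun S _ => hθ0 _, ?_, ?_⟩
    · intro m hm
      have hIcc : ∑ ℓ ∈ Finset.Icc m n, (ℓ.choose m : ℝ) * vOf w ℓ
          = ∑ ℓ ∈ Finset.range (n + 1), (ℓ.choose m : ℝ) * vOf w ℓ := by
        refine Finset.sum_subset (fun ℓ hℓ => ?_) (fun ℓ hℓ1 hℓ2 => ?_)
        · rw [Finset.mem_Icc] at hℓ; rw [Finset.mem_range]; omega
        · rw [Finset.mem_range] at hℓ1; rw [Finset.mem_Icc] at hℓ2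
          have : ℓ < m := by omega
          rw [Nat.choose_eq_zero_of_lt this]
          simp
      rw [hIcc, ← master w, double_count w m]
      rcases Nat.eq_zero_or_pos m with hm0 | hm0
      · subst hm0
        simp only [Finset.powersetCard_zero, Finset.sum_singleton, Nat.choose_zero_right,
          Nat.cast_one, pow_zero, mul_one]
        have : ∑ S ∈ Finset.univ.filter (fun S : Finset (Fin n) => (∅ : Finset (Fin n)) ⊆ S), w S
            = ∑ S : Finset (Fin n), w S := by
          refine Finset.sum_congr ?_ fun _ _ => rfl
          simp
        rw [this, ← sum_toFinset w]
        rw [← hθ1]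
        refine Finset.sum_congr rfl fun c _ => ?_
        exact congrArg θ ((onesEquiv n).symm_apply_apply c)
      · have hsum : ∀ J ∈ Finset.powersetCard m (Finset.univ : Finset (Fin n)),
            ∑ S ∈ Finset.univ.filter (fun S => J ⊆ S), w S = p ^ m := by
          intro J hJ
          rw [Finset.mem_powersetCard] at hJ
          have hJcard := hJ.2
          have hne : J.Nonempty := Finset.card_pos.1 (by omega)
          have := hind J hne (by omega)
          rw [hJcard] at this
          rw [← this]
          exact (sumA θ (fun S => J ⊆ S) (fun c => ∀ i ∈ J, c i = true)
            (fun c => by simp [Finset.subset_iff])).symm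
        rw [Finset.sum_congr rfl hsum, Finset.sum_const, nsmul_eq_mul,
          Finset.card_powersetCard, Finset.card_univ, Fintype.card_fin]
    · rw [probGE, sumA θ (fun S => k ≤ S.card)
        (fun c : Fin n → Bool => k ≤ (Finset.univ.filter (fun i => c i = true)).card)
        (fun c => Iff.rfl)]
      refine Eq.trans (filter_card_sum w (fun ℓ => k ≤ ℓ)) ?_
      exact Finset.sum_congr (Icc_eq_filter_range k).symm (fun _ _ => rfl)
  · -- from a vector to a distribution
    rintro ⟨v, hv, hcon, rfl⟩
    set w : Finset (Fin n) → ℝ := fun S => v S.card / (n.choose S.card : ℝ) with hw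
    set θ : (Fin n → Bool) → ℝ :=
      fun c => w (Finset.univ.filter fun i => c i = true) with hθdef
    have hθS : ∀ S : Finset (Fin n), θ ((onesEquiv n).symm S) = w S := by
      intro S
      show w (Finset.univ.filter fun i => (onesEquiv n).symm S i = true) = w S
      congr 1
      exact (onesEquiv n).apply_symm_apply S
    have hvOf : ∀ ℓ ≤ n, vOf w ℓ = v ℓ := by
      intro ℓ hℓ
      have hset : (Finset.univ : Finset (Finset (Fin n))).filter (fun S => S.card = ℓ)
          = Finset.powersetCard ℓ Finset.univ := by
        ext S; simp [Finset.mem_powersetCard]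
      have hpos : (0 : ℝ) < (n.choose ℓ : ℝ) := by
        exact_mod_cast Nat.choose_pos hℓ
      rw [vOf]
      have : ∀ S ∈ (Finset.univ : Finset (Finset (Fin n))).filter (fun S => S.card = ℓ),
          w S = v ℓ / (n.choose ℓ : ℝ) := by
        intro S hS
        rw [hw]
        simp only
        rw [(Finset.mem_filter.1 hS).2]
      rw [Finset.sum_congr rfl this, Finset.sum_const, hset, Finset.card_powersetCard,
        Finset.card_univ, Fintype.card_fin, nsmul_eq_mul]
      field_simp
    have hsumθ : ∑ c, θ c = 1 := by
      have h0 := hcon 0 (by omega)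
      simp only [Nat.choose_zero_right, Nat.cast_one, pow_zero, one_mul] at h0
      have : ∑ c, θ c = ∑ S : Finset (Fin n), w S := sum_toFinset w
      rw [this]
      have hm := master w (fun _ => (1 : ℝ))
      simp only [one_mul] at hm
      rw [hm]
      rw [← h0, Icc_eq_filter_range 0]
      have : (Finset.range (n + 1)).filter (fun ℓ => 0 ≤ ℓ) = Finset.range (n + 1) := by
        simp
      rw [this]
      exact Finset.sum_congr rfl fun ℓ hℓ => hvOf ℓ (by
        rw [Finset.mem_range] at hℓ; omega)
    refine ⟨θ, ⟨⟨fun c => div_nonneg (hv _) (Nat.cast_nonneg _), hsumθ⟩, ?_⟩, ?_⟩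
    · -- t-wise independence
      intro J hne hJt
      set m := J.card with hm
      have hmn : m ≤ n := le_trans hJt htn
      rw [sumA θ (fun S => J ⊆ S) (fun c => ∀ i ∈ J, c i = true)
        (fun c => by simp [Finset.subset_iff])]
      have hθw : ∑ S ∈ Finset.univ.filter (fun S => J ⊆ S), θ ((onesEquiv n).symm S)
          = ∑ S ∈ Finset.univ.filter (fun S => J ⊆ S), w S :=
        Finset.sum_congr rfl fun S _ => hθS S
      rw [hθw]
      rw [← Finset.sum_fiberwise_of_maps_to (g := fun S : Finset (Fin n) => S.card)
          (t := Finset.range (n + 1))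
          (fun S _ => Finset.mem_range.2 (Nat.lt_succ_of_le (by
            simpa using Finset.card_le_univ S)))]
      have hfib : ∀ ℓ, (Finset.univ.filter (fun S : Finset (Fin n) => J ⊆ S)).filter
            (fun S => S.card = ℓ)
          = Finset.univ.filter (fun S => S.card = ℓ ∧ J ⊆ S) := by
        intro ℓ; ext S; simp only [Finset.mem_filter, Finset.mem_univ, true_and]; tauto
      have hterm : ∀ ℓ, ∑ S ∈ Finset.univ.filter
            (fun S : Finset (Fin n) => S.card = ℓ ∧ J ⊆ S), w S
          = ((Finset.univ.filter (fun S : Finset (Fin n) => S.card = ℓ ∧ J ⊆ S)).card : ℝ)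
            * (v ℓ / (n.choose ℓ : ℝ)) := by
        intro ℓ
        have : ∀ S ∈ Finset.univ.filter (fun S : Finset (Fin n) => S.card = ℓ ∧ J ⊆ S),
            w S = v ℓ / (n.choose ℓ : ℝ) := by
          intro S hS
          rw [hw]
          simp only
          rw [(Finset.mem_filter.1 hS).2.1]
        rw [Finset.sum_congr rfl this, Finset.sum_const, nsmul_eq_mul]
      simp only [hfib, hterm]
      have hrestrict : ∑ ℓ ∈ Finset.range (n + 1),
            ((Finset.univ.filter (fun S : Finset (Fin n) => S.card = ℓ ∧ J ⊆ S)).card : ℝ)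
              * (v ℓ / (n.choose ℓ : ℝ))
          = ∑ ℓ ∈ Finset.Icc m n,
            ((Finset.univ.filter (fun S : Finset (Fin n) => S.card = ℓ ∧ J ⊆ S)).card : ℝ)
              * (v ℓ / (n.choose ℓ : ℝ)) := by
        refine (Finset.sum_subset (fun ℓ hℓ => ?_) (fun ℓ hℓ1 hℓ2 => ?_)).symm
        · rw [Finset.mem_Icc] at hℓ; rw [Finset.mem_range]; omega
        · rw [Finset.mem_range] at hℓ1; rw [Finset.mem_Icc] at hℓ2
          have : ℓ < m := by omega
          rw [count_superset_empty J ℓ (by omega)]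
          simp
      rw [hrestrict]
      have hratio : ∀ ℓ ∈ Finset.Icc m n,
          ((Finset.univ.filter (fun S : Finset (Fin n) => S.card = ℓ ∧ J ⊆ S)).card : ℝ)
              * (v ℓ / (n.choose ℓ : ℝ))
            = (ℓ.choose m : ℝ) * v ℓ / (n.choose m : ℝ) := by
        intro ℓ hℓ
        rw [Finset.mem_Icc] at hℓ
        rw [count_superset J ℓ (by omega)]
        have hid := Nat.choose_mul (n := n) (k := ℓ) (s := m) hℓ.1
        have h1 : (0 : ℝ) < (n.choose ℓ : ℝ) := by exact_mod_cast Nat.choose_pos hℓ.2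
        have h2 : (0 : ℝ) < (n.choose m : ℝ) := by exact_mod_cast Nat.choose_pos hmn
        have hidR : (n.choose ℓ : ℝ) * (ℓ.choose m : ℝ)
            = (n.choose m : ℝ) * ((n - m).choose (ℓ - m) : ℝ) := by exact_mod_cast hid
        rw [show ((n - m).choose (ℓ - m) : ℝ) * (v ℓ / (n.choose ℓ : ℝ))
            = ((n - m).choose (ℓ - m) : ℝ) * v ℓ / (n.choose ℓ : ℝ) from
          (mul_div_assoc _ _ _).symm, div_eq_div_iff h1.ne' h2.ne']
        linear_combination (-(v ℓ)) * hidR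
      rw [Finset.sum_congr rfl hratio]
      have h2 : (0 : ℝ) < (n.choose m : ℝ) := by exact_mod_cast Nat.choose_pos hmn
      rw [show (∑ ℓ ∈ Finset.Icc m n, (ℓ.choose m : ℝ) * v ℓ / (n.choose m : ℝ))
          = (∑ ℓ ∈ Finset.Icc m n, (ℓ.choose m : ℝ) * v ℓ) / (n.choose m : ℝ) from
        (Finset.sum_div _ _ _).symm]
      rw [hcon m hJt]
      field_simp
    · -- probGE value
      rw [probGE, sumA θ (fun S => k ≤ S.card)
        (fun c : Fin n → Bool => k ≤ (Finset.univ.filter (fun i => c i = true)).card)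
        (fun c => Iff.rfl)]
      have hθw : ∑ S ∈ Finset.univ.filter (fun S : Finset (Fin n) => k ≤ S.card),
            θ ((onesEquiv n).symm S)
          = ∑ S ∈ Finset.univ.filter (fun S : Finset (Fin n) => k ≤ S.card), w S :=
        Finset.sum_congr rfl fun S _ => hθS S
      rw [hθw]
      refine Eq.trans (filter_card_sum w (fun ℓ => k ≤ ℓ)) ?_
      refine Finset.sum_congr (Icc_eq_filter_range k).symm (fun ℓ hℓ => ?_)
      exact hvOf ℓ (Finset.mem_Icc.1 hℓ).2
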